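/- arXiv:2006.01025 — 3 statements merged into one kernel-verified Lean document; each statement's English description precedes it below -/
import Mathlib

section
/- For 0 < M/N < 1 and K ≥ 1, the decentralized rate exceeds the centralized rate: K(1-M/N)·(N/(KM))·(1-(1-M/N)^K) ≥ K(1-M/N)/(1+KM/N). -/
/-- The decentralized coded caching rate is at least the centralized rate:
`K(1-M/N)(N/(KM))(1-(1-M/N)^K) ≥ K(1-M/N)/(1+KM/N)`. -/
theorem decentralized_ge_centralized (M N : ℝ) (K : ℕ) (h1 : 0 < M / N)
    (h2 : M / N < 1) (hK : 1 ≤ K) :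
    (K : ℝ) * (1 - M / N) / (1 + K * M / N)
      ≤ (K : ℝ) * (1 - M / N) * (N / (K * M) * (1 - (1 - M / N) ^ K)) := by
  have hM : M ≠ 0 := fun h => by simp [h] at h1
  have hN : N ≠ 0 := fun h => by simp [h] at h1
  have hK0 : (0:ℝ) < K := by exact_mod_cast Nat.lt_of_lt_of_le Nat.zero_lt_one hK
  set x : ℝ := M / N with hx
  have hx0 : 0 < x := h1
  have hx1 : x < 1 := h2
  -- key inequality : (1 + K x) (1 - x)^K ≤ 1
  have hb : 1 + (K:ℝ) * x ≤ (1 + x) ^ K := one_add_mul_le_pow (by linarith) K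
  have hpownn : (0:ℝ) ≤ (1 - x) ^ K := pow_nonneg (by linarith) K
  have key : (1 + (K:ℝ) * x) * (1 - x) ^ K ≤ 1 := by
    calc (1 + (K:ℝ) * x) * (1 - x) ^ K ≤ (1 + x) ^ K * (1 - x) ^ K :=
          mul_le_mul_of_nonneg_right hb hpownn
      _ = (1 - x ^ 2) ^ K := by rw [← mul_pow]; ring_nf
      _ ≤ 1 := pow_le_one₀ (by nlinarith) (by nlinarith)
  have hrepr : (K:ℝ) * (1 - x) * (N / (K * M) * (1 - (1 - x) ^ K))
      = (1 - x) * (1 - (1 - x) ^ K) / x := by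
    rw [hx]
    field_simp
  have hKMN : (K:ℝ) * M / N = (K:ℝ) * x := by rw [hx, mul_div_assoc]
  rw [hrepr, hKMN, div_le_div_iff₀ (by nlinarith) hx0]
  nlinarith [mul_le_mul_of_nonneg_left key (le_of_lt (show (0:ℝ) < 1 - x by linarith))]
end

section
/- In the two-user, two-file example with M = 1: if each of files A and B (each F bits) is split into halves A1,A2 and B1,B2, cache 1 stores (A1,B1) and cache 2 stores (A2,B2), then for any pair of requests (d1,d2) ∈ {A,B}², a single broadcast of F/2 bits suffices for both users to recover their requested files, where the broadcast is the XOR of the subfile of d1 stored in cache 2 with the subfile of d2 stored in cache 1. -/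
/-- Two-user, two-file coded caching example with `M = 1`.  Files `A` and `B`
are pairs of half-files (elements of a `GF(2)` vector space).  Cache 1 stores
`(A₁, B₁)` and cache 2 stores `(A₂, B₂)`.  For any requests `(d₁, d₂)`, the
single broadcast consisting of the XOR of the subfile of `d₁` stored in cache 2
with the subfile of `d₂` stored in cache 1 lets each user recover its requested
file from its own cache and the broadcast. -/
theorem two_user_two_file_example (V : Type*) [AddCommGroup V] [Module (ZMod 2) V] :
    ∃ g₁ g₂ : Bool → Bool → (V × V) → V → (V × V),
      ∀ (A B : V × V) (d₁ d₂ : Bool),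
        g₁ d₁ d₂ (A.1, B.1)
            ((if d₁ then A else B).2 + (if d₂ then A else B).1)
          = (if d₁ then A else B)
        ∧ g₂ d₁ d₂ (A.2, B.2)
            ((if d₁ then A else B).2 + (if d₂ then A else B).1)
          = (if d₂ then A else B) := by
  refine ⟨fun d₁ d₂ c x => ((if d₁ then c.1 else c.2), x - (if d₂ then c.1 else c.2)),
         fun d₁ d₂ c x => (x - (if d₁ then c.1 else c.2), (if d₂ then c.1 else c.2)), ?_⟩
  intro A B d₁ d₂
  cases d₁ <;> cases d₂ <;> simp [Prod.ext_iff]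
end

section
/- In the Maddah-Ali–Niesen delivery scheme, for any user i and any t-subset T of {1,...,K}\{i}, user i can recover subfile W_{d_i}^T from the broadcast message corresponding to S = T ∪ {i} together with its cache contents, because every other subfile W_{d_j}^{S\{j}} appearing in the XOR (for j ∈ S, j ≠ i) satisfies i ∈ S\{j} and is therefore stored in cache i. -/
/-- Decodability of the Maddah-Ali–Niesen delivery scheme: for user `i` and any
`t`-subset `T` of the other users, every subfile `W_{d_j}^{S\{j}}`, `j ∈ T`,
appearing in the broadcast for `S = T ∪ {i}` has `i ∈ S\{j}` (hence is stored
in cache `i`), and user `i` recovers `W_{d_i}^T` by subtracting (XOR-ing) those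
subfiles from the broadcast message `⊕_{j∈S} W_{d_j}^{S\{j}}`. -/
theorem man_decodability (V : Type*) [AddCommGroup V] [Module (ZMod 2) V]
    (K N t : ℕ) (d : Fin K → Fin N) (W : Fin N → Finset (Fin K) → V)
    (i : Fin K) (T : Finset (Fin K)) (hT : T.card = t) (hiT : i ∉ T) :
    (∀ j ∈ T, i ∈ insert i T \ {j})
    ∧ W (d i) T
        = (∑ j ∈ insert i T, W (d j) (insert i T \ {j}))
          - ∑ j ∈ T, W (d j) (insert i T \ {j}) := by
  constructor
  · intro j hj
    simp [Finset.mem_sdiff]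
    rintro rfl; exact hiT hj
  · rw [Finset.sum_insert hiT]
    have : insert i T \ {i} = T := by
      ext x; simp [Finset.mem_sdiff]
      constructor
      · rintro ⟨h1 | h1, h2⟩
        · exact absurd h1 h2
        · exact h1
      · intro hx; exact ⟨Or.inr hx, fun h => hiT (h ▸ hx)⟩
    rw [this]; abel
end
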